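/- Let S be an ordered abelian semigroup and u ∈ S a compact element (u ≪ u). If there exist an element x ∈ S and integers 1 ≤ n < m with m·x ≤ u ≤ n·x, then u is properly infinite, i.e., 2u ≤ u. -/

import Mathlib

/-- `x` is way below `y`: whenever `y` is the supremum of an increasing sequence,
`x` is dominated by some term of the sequence. -/
def WayBelow {S : Type*} [Preorder S] (x y : S) : Prop :=
  ∀ f : ℕ → S, Monotone f → IsLUB (Set.range f) y → ∃ i, x ≤ f i

/-- In a positively ordered abelian monoid, if `u` is compact (`u ≪ u`) and
there are `x` and integers `1 ≤ n < m` with `m • x ≤ u ≤ n • x`, then `u` is properly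
infinite: `u + u ≤ u`. -/
theorem compact_div_properly_infinite {S : Type*} [AddCommMonoid S] [PartialOrder S] [IsOrderedAddMonoid S]
    (hpos : ∀ s : S, 0 ≤ s)
    (u : S) (hu : WayBelow u u)
    (m n : ℕ) (hn : 1 ≤ n) (hnm : n < m)
    (x : S) (hmx : m • x ≤ u) (hnx : u ≤ n • x) :
    u + u ≤ u := by
  have hux : u + x ≤ u := by
    calc u + x ≤ n • x + x := add_le_add_left hnx x
    _ = (n + 1) • x := by rw [add_nsmul, one_nsmul]
    _ ≤ m • x := by
        have : m • x = (n + 1) • x + (m - (n + 1)) • x := by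
          rw [← add_nsmul]; congr 1; omega
        rw [this]
        exact le_add_of_nonneg_right (hpos _)
    _ ≤ u := hmx
  have key : ∀ k : ℕ, u + k • x ≤ u := by
    intro k
    induction k with
    | zero => simp
    | succ k ih =>
        calc u + (k + 1) • x = (u + k • x) + x := by
              rw [add_nsmul, one_nsmul, add_assoc]
        _ ≤ u + x := add_le_add_left ih x
        _ ≤ u := hux
  calc u + u ≤ u + n • x := add_le_add_right hnx u
  _ ≤ u := key n
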